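/- The braid group action φ on T_n preserves the R-submodule spanned by the n² elements f_{i,j}; i.e., for each generator X_i and each pair (j,k), the element φ(X_i)(f_{j,k}) lies in the span of {f_{p,q} : p,q ∈ {1,…,n}}. -/

import Mathlib

/-- The braid operator `φ(X_i)` on the algebra `T_n` (with basis `1, f_{j,k}`), defined by
`f_{j,j} ↦ f_{j,j}` for `j ≠ i, i+1`, `f_{i+1,i+1} ↦ f_{i,i}`,
`f_{i,i} ↦ α⁻¹ (Y_i Y_{i+1} Y_i⁻¹ - β)`, `f_{j,k} ↦ φ(X_i)(f_{j,j}) φ(X_i)(f_{k,k}) c⁻¹`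
for `j ≠ k`, and `1 ↦ 1`; here `Y_k = α f_{k,k} + β` and
`Y_k⁻¹ = β⁻¹ (1 - α γ⁻¹ f_{k,k})` with `γ = β + cα`. -/
noncomputable def phiOp {R T : Type*} [CommRing R] [Ring T] [Algebra R T]
    {n : ℕ} (f : Fin n → Fin n → T) (b : Module.Basis (Option (Fin n × Fin n)) R T)
    (c α β γ : Rˣ) (i : ℕ) (hi : i + 1 < n) : T →ₗ[R] T :=
  letI ii : Fin n := ⟨i, Nat.lt_of_succ_lt hi⟩
  letI jj : Fin n := ⟨i + 1, hi⟩
  letI Y : Fin n → T := fun k => (α : R) • f k k + (β : R) • 1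
  letI Yinv : Fin n → T := fun k =>
    ((β⁻¹ : Rˣ) : R) • (1 - ((α : R) * ((γ⁻¹ : Rˣ) : R)) • f k k)
  letI d : Fin n → T := fun k =>
    if k = ii then ((α⁻¹ : Rˣ) : R) • (Y ii * Y jj * Yinv ii - (β : R) • 1)
    else if k = jj then f ii ii
    else f k k
  b.constr ℕ fun x => match x with
    | none => 1
    | some (j, k) => if j = k then d j else ((c⁻¹ : Rˣ) : R) • (d j * d k)

/-- The braid group action `φ` on `T_n` preserves the `R`-submodule spanned by the `n²`
elements `f_{j,k}`: each `φ(X_i)(f_{j,k})` lies in the span of the `f_{p,q}`. -/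
theorem phiOp_preserves_span
    (R T : Type*) [CommRing R] [Ring T] [Algebra R T]
    (n : ℕ) (f : Fin n → Fin n → T) (b : Module.Basis (Option (Fin n × Fin n)) R T)
    (hb1 : b none = 1) (hbf : ∀ j k, b (some (j, k)) = f j k)
    (c α β γ : Rˣ) (hγ : (γ : R) = (β : R) + (c : R) * (α : R))
    (hrel : ∀ i j k l, f i j * f k l = (c : R) • f i l)
    (i : ℕ) (hi : i + 1 < n) (j k : Fin n) :
    phiOp f b c α β γ i hi (f j k) ∈
      Submodule.span R (Set.range fun p : Fin n × Fin n => f p.1 p.2) := by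
  classical
  set S := Submodule.span R (Set.range fun p : Fin n × Fin n => f p.1 p.2) with hSdef
  have hf : ∀ p q : Fin n, f p q ∈ S := fun p q => Submodule.subset_span ⟨(p, q), rfl⟩
  have hSS : S * S ≤ S := by
    rw [hSdef, Submodule.span_mul_span]
    refine Submodule.span_le.2 ?_
    rintro _ ⟨x, ⟨p, rfl⟩, y, ⟨q, rfl⟩, rfl⟩
    simp only []
    rw [hrel]
    exact Submodule.smul_mem _ _ (hf _ _)
  have hmul : ∀ x ∈ S, ∀ y ∈ S, x * y ∈ S := fun x hx y hy =>
    hSS (Submodule.mul_mem_mul hx hy)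
  set ii : Fin n := ⟨i, Nat.lt_of_succ_lt hi⟩ with hii
  set jj : Fin n := ⟨i + 1, hi⟩ with hjj
  set a : R := (α : R)
  set B : R := (β : R)
  set C : R := (c : R)
  set Bi : R := ((β⁻¹ : Rˣ) : R)
  set G : R := ((γ⁻¹ : Rˣ) : R)
  have hβ : Bi * B = 1 := β.inv_mul
  have key : (a • f ii ii + B • 1) * (a • f jj jj + B • 1) * (Bi • (1 - (a * G) • f ii ii))
      - B • 1
      = (Bi * a * a * C) • f ii jj
        + (a - Bi * a * G * (a * a * C * C + a * B * C + B * B)) • f ii ii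
        + a • f jj jj
        - (a * a * G * C) • f jj ii := by
    have h1 : f ii ii * f jj jj = C • f ii jj := hrel ..
    have h2 : f ii jj * f ii ii = C • f ii ii := hrel ..
    have h3 : f ii ii * f ii ii = C • f ii ii := hrel ..
    have h4 : f jj jj * f ii ii = C • f jj ii := hrel ..
    simp only [mul_sub, sub_mul, mul_add, add_mul, smul_mul_assoc, mul_smul_comm,
      mul_one, one_mul, smul_smul, smul_sub, h1, h2, h3, h4]
    match_scalars
    any_goals ring1
    all_goals first
      | linear_combination a * hβ
      | linear_combination B * hβ
      | linear_combination a * a * G * C * hβ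
      | linear_combination (-(a * a * G * C)) * hβ
  have hkey : (a • f ii ii + B • 1) * (a • f jj jj + B • 1) *
      (Bi • (1 - (a * G) • f ii ii)) - B • 1 ∈ S := by
    rw [key]
    refine Submodule.sub_mem _ (Submodule.add_mem _ (Submodule.add_mem _ ?_ ?_) ?_) ?_ <;>
      exact Submodule.smul_mem _ _ (hf _ _)
  set dd : Fin n → T := fun p =>
    if p = ii then ((α⁻¹ : Rˣ) : R) • ((a • f ii ii + B • 1) * (a • f jj jj + B • 1) *
        (Bi • (1 - (a * G) • f ii ii)) - B • 1)
      else if p = jj then f ii ii else f p p with hdd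
  have hd : ∀ p : Fin n, dd p ∈ S := by
    intro p
    rw [hdd]
    simp only []
    split_ifs with h1 h2
    · exact Submodule.smul_mem _ _ hkey
    · exact hf _ _
    · exact hf _ _
  have heval : phiOp f b c α β γ i hi (f j k)
      = if j = k then dd j else ((c⁻¹ : Rˣ) : R) • (dd j * dd k) := by
    rw [← hbf j k, hdd]
    simp only [phiOp, Module.Basis.constr_basis]
    rfl
  rw [heval]
  split_ifs with h
  · exact hd j
  · exact Submodule.smul_mem _ _ (hmul _ (hd j) _ (hd k))
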